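/- Let X and Y be complex Banach spaces, let H : X → Y be a compact bounded linear operator, and for each n ∈ ℕ let H_n : X_n → Y_n be bounded linear operators. If (H_n) converges uniformly to H, then (H_n) converges compactly to H; that is, for every sequence (x_n) with x_n ∈ X_n and ‖x_n‖ ≤ 1 for all n, and for every subsequence of (H_n x_n), there exist a further subsequence and an element y ∈ Y such that ‖H_n x_n − q_n y‖ → 0 along that further subsequence. -/

import Mathlib

open Filter Topology

section

variable {X Y : Type*} [NormedAddCommGroup X] [NormedSpace ℂ X] [CompleteSpace X]
  [NormedAddCommGroup Y] [NormedSpace ℂ Y] [CompleteSpace Y]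

/-- `Fₙ : Xₙ → Yₙ` converges (discretely) to `F : X → Y`:
`‖Fₙ(pₙ x) − qₙ(F x)‖ → 0` for every `x ∈ X`. -/
def Converges (Xn : ℕ → Submodule ℂ X) (Yn : ℕ → Submodule ℂ Y)
    (p : ℕ → X →L[ℂ] X) (q : ℕ → Y →L[ℂ] Y)
    (hpmem : ∀ n x, p n x ∈ Xn n)
    (Fn : ∀ n, (Xn n) →L[ℂ] (Yn n)) (F : X →L[ℂ] Y) : Prop :=
  ∀ x : X,
    Tendsto (fun n => ‖((Fn n ⟨p n x, hpmem n x⟩ : Yn n) : Y) - q n (F x)‖) atTop (𝓝 0)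

/-- A sequence `(yₙ)`, `yₙ ∈ Yₙ`, is `Q`-compact: every subsequence has a further
subsequence along which `‖yₙ − qₙ y‖ → 0` for some `y ∈ Y`. -/
def QCompact (Yn : ℕ → Submodule ℂ Y) (q : ℕ → Y →L[ℂ] Y)
    (y : ∀ n, Yn n) : Prop :=
  ∀ φ : ℕ → ℕ, StrictMono φ → ∃ ψ : ℕ → ℕ, StrictMono ψ ∧ ∃ z : Y,
    Tendsto (fun k => ‖((y (φ (ψ k)) : Y)) - q (φ (ψ k)) z‖) atTop (𝓝 0)

/-- `Fₙ` converges uniformly to `F`: the operator norms of `Fₙ ∘ pₙ − qₙ ∘ F`,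
as operators from `X` to `Y`, tend to `0`. -/
def ConvergesUniformly (Xn : ℕ → Submodule ℂ X) (Yn : ℕ → Submodule ℂ Y)
    (p : ℕ → X →L[ℂ] X) (q : ℕ → Y →L[ℂ] Y)
    (hpmem : ∀ n x, p n x ∈ Xn n)
    (Fn : ∀ n, (Xn n) →L[ℂ] (Yn n)) (F : X →L[ℂ] Y) : Prop :=
  Tendsto (fun n =>
      ‖((Yn n).subtypeL.comp (Fn n)).comp ((p n).codRestrict (Xn n) (hpmem n)) -
        (q n).comp F‖) atTop (𝓝 0)

/-- `Fₙ` converges compactly to `F`: `Fₙ → F` and `(Fₙ xₙ)` is `Q`-compact for every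
sequence `(xₙ)` with `xₙ ∈ Xₙ` and `‖xₙ‖ ≤ 1` for all `n`. -/
def ConvergesCompactly (Xn : ℕ → Submodule ℂ X) (Yn : ℕ → Submodule ℂ Y)
    (p : ℕ → X →L[ℂ] X) (q : ℕ → Y →L[ℂ] Y)
    (hpmem : ∀ n x, p n x ∈ Xn n)
    (Fn : ∀ n, (Xn n) →L[ℂ] (Yn n)) (F : X →L[ℂ] Y) : Prop :=
  Converges Xn Yn p q hpmem Fn F ∧
    ∀ x : ∀ n, Xn n, (∀ n, ‖(x n : X)‖ ≤ 1) → QCompact Yn q (fun n => Fn n (x n))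

/-- If `H` is compact and `Hₙ` converges uniformly to `H`, then `Hₙ` converges compactly
to `H`. -/
theorem compact_convergence_of_uniform_convergence
    (Xn : ℕ → Submodule ℂ X) (Yn : ℕ → Submodule ℂ Y)
    (hXc : ∀ n, IsClosed (Xn n : Set X)) (hYc : ∀ n, IsClosed (Yn n : Set Y))
    (p : ℕ → X →L[ℂ] X) (q : ℕ → Y →L[ℂ] Y)
    (hpmem : ∀ n x, p n x ∈ Xn n) (hqmem : ∀ n y, q n y ∈ Yn n)
    (hpproj : ∀ n, ∀ x ∈ Xn n, p n x = x) (hqproj : ∀ n, ∀ y ∈ Yn n, q n y = y)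
    (hpconv : ∀ x : X, Tendsto (fun n => ‖x - p n x‖) atTop (𝓝 0))
    (hqconv : ∀ y : Y, Tendsto (fun n => ‖y - q n y‖) atTop (𝓝 0))
    (H : X →L[ℂ] Y) (Hn : ∀ n, (Xn n) →L[ℂ] (Yn n))
    (hHcpt : IsCompactOperator H)
    (hHunif : ConvergesUniformly Xn Yn p q hpmem Hn H) :
    ConvergesCompactly Xn Yn p q hpmem Hn H := by
  -- bound on the norms of `q n` via Banach–Steinhaus
  obtain ⟨C, hC⟩ : ∃ C, ∀ n, ‖q n‖ ≤ C := by
    apply banach_steinhaus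
    intro y
    have h1 : Tendsto (fun n => q n y) atTop (𝓝 y) := by
      rw [← tendsto_sub_nhds_zero_iff]
      exact tendsto_zero_iff_norm_tendsto_zero.2
        ((hqconv y).congr fun n => norm_sub_rev _ _)
    obtain ⟨c, hc⟩ := (h1.norm.bddAbove_range)
    exact ⟨c, fun n => hc ⟨n, rfl⟩⟩
  have hCnn : 0 ≤ C := le_trans (norm_nonneg _) (hC 0)
  -- key estimate from uniform convergence
  have key : ∀ n (x : X), ‖((Hn n ⟨p n x, hpmem n x⟩ : Yn n) : Y) - q n (H x)‖ ≤
      ‖((Yn n).subtypeL.comp (Hn n)).comp ((p n).codRestrict (Xn n) (hpmem n)) -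
        (q n).comp H‖ * ‖x‖ := by
    intro n x
    have := ((((Yn n).subtypeL.comp (Hn n)).comp ((p n).codRestrict (Xn n) (hpmem n)) -
        (q n).comp H)).le_opNorm x
    simp at this
    exact this
  constructor
  · intro x
    have h0 : Tendsto (fun n => ‖((Yn n).subtypeL.comp (Hn n)).comp
        ((p n).codRestrict (Xn n) (hpmem n)) - (q n).comp H‖ * ‖x‖) atTop (𝓝 0) := by
      simpa using hHunif.mul_const ‖x‖
    exact squeeze_zero (fun n => norm_nonneg _) (fun n => key n x) h0
  · intro x hx φ hφ
    -- compactness: extract convergent subsequence of `H (x (φ k))`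
    have hK : IsCompact (closure (H '' Metric.closedBall 0 1)) :=
      IsCompactOperator.isCompact_closure_image_closedBall (𝕜₁ := ℂ)
        (f := (H : X →ₗ[ℂ] Y)) hHcpt 1
    have hmem : ∀ k, H (x (φ k) : X) ∈ closure (H '' Metric.closedBall 0 1) := fun k =>
      subset_closure ⟨x (φ k), by simpa [Metric.mem_closedBall, dist_eq_norm] using hx (φ k), rfl⟩
    obtain ⟨z, _, ψ, hψ, hzt⟩ := hK.tendsto_subseq hmem
    refine ⟨ψ, hψ, z, ?_⟩
    have hzt' : Tendsto (fun k => ‖H (x (φ (ψ k)) : X) - z‖) atTop (𝓝 0) := by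
      rw [← tendsto_sub_nhds_zero_iff] at hzt
      exact (tendsto_zero_iff_norm_tendsto_zero.1 hzt)
    have hsub : Tendsto (fun k => ‖((Yn (φ (ψ k))).subtypeL.comp (Hn (φ (ψ k)))).comp
        ((p (φ (ψ k))).codRestrict (Xn (φ (ψ k))) (hpmem (φ (ψ k)))) -
        (q (φ (ψ k))).comp H‖) atTop (𝓝 0) :=
      hHunif.comp ((hφ.comp hψ).tendsto_atTop)
    have hbound : ∀ k, ‖((Hn (φ (ψ k)) (x (φ (ψ k))) : Yn (φ (ψ k))) : Y) - q (φ (ψ k)) z‖ ≤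
        ‖((Yn (φ (ψ k))).subtypeL.comp (Hn (φ (ψ k)))).comp
          ((p (φ (ψ k))).codRestrict (Xn (φ (ψ k))) (hpmem (φ (ψ k)))) -
          (q (φ (ψ k))).comp H‖ + C * ‖H (x (φ (ψ k)) : X) - z‖ := by
      intro k
      set n := φ (ψ k)
      have hx_eq : (⟨p n (x n : X), hpmem n (x n : X)⟩ : Xn n) = x n := by
        ext; exact hpproj n (x n : X) (x n).2
      calc ‖((Hn n (x n) : Yn n) : Y) - q n z‖
          ≤ ‖((Hn n (x n) : Yn n) : Y) - q n (H (x n : X))‖ +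
            ‖q n (H (x n : X)) - q n z‖ := by
            simpa using norm_sub_le_norm_sub_add_norm_sub
              ((Hn n (x n) : Yn n) : Y) (q n (H (x n : X))) (q n z)
        _ ≤ ‖((Yn n).subtypeL.comp (Hn n)).comp ((p n).codRestrict (Xn n) (hpmem n)) -
              (q n).comp H‖ * ‖(x n : X)‖ + C * ‖H (x n : X) - z‖ := by
            gcongr
            · have := key n (x n : X)
              rwa [hx_eq] at this
            · have : ‖q n (H (x n : X) - z)‖ ≤ ‖q n‖ * ‖H (x n : X) - z‖ :=
                (q n).le_opNorm _
              rw [map_sub] at this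
              exact this.trans (by gcongr; exact hC n)
        _ ≤ _ := by
            gcongr
            nlinarith [norm_nonneg (((Yn n).subtypeL.comp (Hn n)).comp
              ((p n).codRestrict (Xn n) (hpmem n)) - (q n).comp H), hx n]
    have hlim : Tendsto (fun k => ‖((Yn (φ (ψ k))).subtypeL.comp (Hn (φ (ψ k)))).comp
        ((p (φ (ψ k))).codRestrict (Xn (φ (ψ k))) (hpmem (φ (ψ k)))) -
        (q (φ (ψ k))).comp H‖ + C * ‖H (x (φ (ψ k)) : X) - z‖) atTop (𝓝 0) := by
      simpa using hsub.add (hzt'.const_mul C)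
    exact squeeze_zero (fun k => norm_nonneg _) hbound hlim


end
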